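/- Let F be a field, let n ≥ 1, let p(x) = xⁿ + u_{n-1}x^{n-1} + ⋯ + u₀ ∈ F[x] be monic of degree n, and let A be the companion matrix of p(x). Then for every monic polynomial q(x) = xⁿ + u_{n-1}x^{n-1} + v_{n-2}x^{n-2} + ⋯ + v₀ ∈ F[x] of degree n whose coefficient of x^{n-1} equals u_{n-1}, there exists a square-zero matrix N ∈ M_n(F) such that A + N is the companion matrix of q(x); in particular the characteristic polynomial of A + N equals q(x) and A + N is non-derogatory. -/

import Mathlib

open Polynomial Matrix

/-- The companion matrix of a (monic) polynomial `p`, as an `n × n` matrix: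
1's on the subdiagonal, last column `(-p.coeff 0, …, -p.coeff (n-1))ᵀ`, zeros elsewhere. -/
def companionMatrix {F : Type*} [Field F] (n : ℕ) (p : Polynomial F) :
    Matrix (Fin n) (Fin n) F :=
  Matrix.of fun i j =>
    if (j : ℕ) = n - 1 then -p.coeff i
    else if (i : ℕ) = (j : ℕ) + 1 then 1 else 0

lemma companion_key {F : Type*} [Field F] {n : ℕ} (hn : 1 ≤ n) (q : Polynomial F)
    (hq : q.Monic) (hd : q.natDegree = n) :
    (companionMatrix n q).charpoly = q ∧
      minpoly F (companionMatrix n q) = q := by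
  classical
  set S := AdjoinRoot q with hS
  let pb := AdjoinRoot.powerBasis' hq
  have hdim : pb.dim = n := by simp [pb, hd]
  let b : Module.Basis (Fin n) F S := pb.basis.reindex (finCongr hdim)
  have hb : ∀ i : Fin n, b i = AdjoinRoot.root q ^ (i : ℕ) := by
    intro i
    simp only [b, Module.Basis.reindex_apply, pb.basis_eq_pow]
    rfl
  let f : Module.End F S := Algebra.lmul F S (AdjoinRoot.root q)
  -- the crucial relation root^n = -∑ coeff i • root^i
  have hroot : AdjoinRoot.root q ^ n = ∑ i : Fin n, (-q.coeff i) • AdjoinRoot.root q ^ (i : ℕ) := by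
    have h0 : (aeval (AdjoinRoot.root q)) q = 0 := by
      rw [AdjoinRoot.aeval_eq, AdjoinRoot.mk_self]
    rw [Polynomial.aeval_eq_sum_range, hd, Finset.sum_range_succ] at h0
    have hcn : q.coeff n = 1 := by rw [← hd]; exact hq.coeff_natDegree
    rw [hcn, one_smul] at h0
    have h1 : AdjoinRoot.root q ^ n = -∑ i ∈ Finset.range n, q.coeff i • AdjoinRoot.root q ^ i :=
      eq_neg_of_add_eq_zero_right h0
    rw [h1, ← Finset.sum_neg_distrib,
      Finset.sum_range fun i => -(q.coeff i • AdjoinRoot.root q ^ i)]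
    exact Finset.sum_congr rfl fun i _ => by rw [neg_smul]
  have key : ∀ j : Fin n, f (b j) = ∑ i, companionMatrix n q i j • b i := by
    intro j
    have hfb : f (b j) = AdjoinRoot.root q ^ ((j : ℕ) + 1) := by
      rw [hb]; simp [f, pow_succ']
    by_cases hj : (j : ℕ) = n - 1
    · -- last column
      have hj1 : (j : ℕ) + 1 = n := by omega
      rw [hfb, hj1, hroot]
      refine Finset.sum_congr rfl fun i _ => ?_
      rw [hb, companionMatrix]
      simp [hj]
    · rw [hfb]
      have hjn : (j : ℕ) + 1 < n := by omega
      rw [Finset.sum_eq_single (⟨(j : ℕ) + 1, hjn⟩ : Fin n)]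
      · rw [hb, companionMatrix]; simp [hj]
      · intro i _ hi
        rw [companionMatrix]
        have : (i : ℕ) ≠ (j : ℕ) + 1 := fun h => hi (Fin.ext h)
        simp [hj, this]
      · simp
  -- f is represented by the companion matrix
  have hM : LinearMap.toMatrixAlgEquiv b f = companionMatrix n q := by
    have hf : f = Matrix.toLin b b (companionMatrix n q) := by
      apply b.ext
      intro j
      rw [Matrix.toLin_self]
      exact key j
    rw [hf]
    exact LinearMap.toMatrix_toLin b b _
  -- any annihilating polynomial of the companion matrix is divisible by q
  have hdvd : ∀ c : Polynomial F, aeval (companionMatrix n q) c = 0 → q ∣ c := by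
    intro c hc
    rw [← hM, aeval_algHom_apply, map_eq_zero_iff _ (AlgEquiv.injective _)] at hc
    have h1 : (aeval f c : Module.End F S) 1 = 0 := by rw [hc]; rfl
    rw [show f = (Algebra.lmul F S) (AdjoinRoot.root q) from rfl,
      aeval_algHom_apply] at h1
    simp only [Algebra.lmul, AlgHom.coe_mk] at h1
    have h3 : (aeval (AdjoinRoot.root q)) c * 1 = 0 := h1
    rw [mul_one] at h3
    rwa [AdjoinRoot.aeval_eq, AdjoinRoot.mk_eq_zero] at h3
  haveI : NeZero n := ⟨by omega⟩
  have hcar : Fintype.card (Fin n) = n := Fintype.card_fin n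
  have hcp_monic : (companionMatrix n q).charpoly.Monic := Matrix.charpoly_monic _
  have hcp_deg : (companionMatrix n q).charpoly.natDegree = n := by
    rw [Matrix.charpoly_natDegree_eq_dim, hcar]
  have hcp : (companionMatrix n q).charpoly = q := by
    obtain ⟨u, hu⟩ := hdvd _ (Matrix.aeval_self_charpoly _)
    have hu0 : u ≠ 0 := by rintro rfl; rw [mul_zero] at hu; exact hcp_monic.ne_zero hu
    have hdeg : u.natDegree = 0 := by
      have := Polynomial.natDegree_mul hq.ne_zero hu0
      rw [← hu, hcp_deg, hd] at this
      omega
    have hlc : u.leadingCoeff = 1 := by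
      have := hcp_monic
      rw [Polynomial.Monic, hu, Polynomial.leadingCoeff_mul, hq.leadingCoeff, one_mul] at this
      exact this
    have hc0 : u.coeff 0 = 1 := by
      rw [← hlc]; simp [Polynomial.leadingCoeff, hdeg]
    have : u = 1 := by
      rw [Polynomial.eq_C_of_natDegree_eq_zero hdeg, hc0, Polynomial.C_1]
    rw [hu, this, mul_one]
  refine ⟨hcp, ?_⟩
  have hmin_dvd : minpoly F (companionMatrix n q) ∣ q := by
    have := minpoly.dvd F (companionMatrix n q)
      (Matrix.aeval_self_charpoly (companionMatrix n q))
    rwa [hcp] at this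
  have hq_dvd : q ∣ minpoly F (companionMatrix n q) :=
    hdvd _ (minpoly.aeval F _)
  exact (Polynomial.eq_of_monic_of_associated
    (minpoly.monic (Matrix.isIntegral _)) hq
    (associated_of_dvd_dvd hmin_dvd hq_dvd)).trans rfl

theorem prescribed_charpoly_companion
    (F : Type*) [Field F] (n : ℕ) (hn : 1 ≤ n)
    (p : Polynomial F) (hp : p.Monic) (hpdeg : p.natDegree = n)
    (A : Matrix (Fin n) (Fin n) F) (hA : A = companionMatrix n p)
    (q : Polynomial F) (hq : q.Monic) (hqdeg : q.natDegree = n)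
    (htr : q.coeff (n - 1) = p.coeff (n - 1)) :
    ∃ N : Matrix (Fin n) (Fin n) F, N ^ 2 = 0 ∧
      A + N = companionMatrix n q ∧
      (A + N).charpoly = q ∧
      minpoly F (A + N) = (A + N).charpoly := by
  classical
  set N : Matrix (Fin n) (Fin n) F := companionMatrix n q - companionMatrix n p with hN
  have hNentry : ∀ i k : Fin n, N i k =
      if (k : ℕ) = n - 1 then p.coeff i - q.coeff i else 0 := by
    intro i k
    by_cases hk : (k : ℕ) = n - 1 <;> simp [hN, companionMatrix, hk] <;> ring
  have hsq : N ^ 2 = 0 := by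
    ext i j
    rw [pow_two, Matrix.mul_apply]
    rw [Matrix.zero_apply]
    apply Finset.sum_eq_zero
    intro k _
    by_cases hk : (k : ℕ) = n - 1
    · by_cases hj : (j : ℕ) = n - 1
      · rw [hNentry k j, if_pos hj, hk, htr, sub_self, mul_zero]
      · rw [hNentry k j, if_neg hj, mul_zero]
    · rw [hNentry i k, if_neg hk, zero_mul]
  have hAN : A + N = companionMatrix n q := by
    rw [hA, hN]; abel
  obtain ⟨h1, h2⟩ := companion_key hn q hq hqdeg
  exact ⟨N, hsq, hAN, by rw [hAN, h1], by rw [hAN, h1, h2]⟩
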